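/- Let S, Q ⊆ ℝ × ℝ^d be high-dimensional periodic sequences and let ε ≥ 0. Suppose there is a bijection h : S → Q with ‖x − h(x)‖ ≤ ε for all x ∈ S (Euclidean norm on ℝ × ℝ^d), and suppose 2ε is strictly smaller than every distance between two distinct points of the time projection t(S) and every distance between two distinct points of t(Q). Then Elm^o(S,Q) ≤ 2ε. In particular Elm^o(S,Q) ≤ 2·d_B(S,Q) whenever 2·d_B(S,Q) is smaller than the minimum distance between points of t(S) and of t(Q), where d_B is the bottleneck distance. -/

import Mathlib

/-- A high-dimensional periodic sequence in `ℝ × ℝ^d`: a period `l > 0` and a motif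
`p : Fin m → ℝ × ℝ^d` with strictly increasing time coordinates in `[0, l)`, giving the set
`{p i + j·l·e₁ : i ∈ Fin m, j ∈ ℤ}`. -/
structure HSeq (d m : ℕ) where
  m_pos : 0 < m
  l : ℝ
  l_pos : 0 < l
  p : Fin m → ℝ × EuclideanSpace ℝ (Fin d)
  t_strict : StrictMono fun i => (p i).1
  t0_nonneg : 0 ≤ (p ⟨0, m_pos⟩).1
  t_lt : ∀ i, (p i).1 < l

namespace HSeq

variable {d m : ℕ}

/-- The point set `{p i + j·l·e₁ : i ∈ Fin m, j ∈ ℤ}` of the sequence. -/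
def pts (S : HSeq d m) : Set (ℝ × EuclideanSpace ℝ (Fin d)) :=
  {x | ∃ (i : Fin m) (j : ℤ), x = ((S.p i).1 + S.l * j, (S.p i).2)}

/-- The time projection `t(S) ⊆ ℝ` of the point set. -/
def tpts (S : HSeq d m) : Set ℝ :=
  {r | ∃ (i : Fin m) (j : ℤ), r = (S.p i).1 + S.l * j}

/-- The period is minimal: the same set of points cannot be produced with a smaller period. -/
def IsMinimal (S : HSeq d m) : Prop :=
  ∀ (m' : ℕ) (T : HSeq d m'), T.pts = S.pts → S.l ≤ T.l

/-- The time distance list `DL`, indexed by `ZMod m`. -/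
noncomputable def DL (S : HSeq d m) : ZMod m → ℝ := fun i =>
  letI : NeZero m := ⟨S.m_pos.ne'⟩
  if h : i.val + 1 < m then (S.p ⟨i.val + 1, h⟩).1 - (S.p ⟨i.val, i.val_lt⟩).1
  else (S.p ⟨0, S.m_pos⟩).1 + S.l - (S.p ⟨i.val, i.val_lt⟩).1

/-- The time distance list of the multiple `(n/m)S` with `m ∣ n`: the `(n/m)`-fold
concatenation of `DL S`. -/
noncomputable def DLc (S : HSeq d m) (n : ℕ) : ZMod n → ℝ :=
  fun i => S.DL ((i.val : ZMod m))

/-- The value projection of the motif of the multiple `(n/m)S` with `m ∣ n`,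
indexed by `ZMod n`. -/
def vproj (S : HSeq d m) (n : ℕ) : ZMod n → EuclideanSpace ℝ (Fin d) :=
  fun i => (S.p ⟨i.val % m, Nat.mod_lt _ S.m_pos⟩).2

/-- The oriented elastic metric for high-dimensional periodic sequences:
`Elm^o(S,Q) = min_{s ∈ ZMod n} max {d_t(s), d_v(s)}` with `n = lcm(m₁,m₂)`, where
`d_t(s) = max_j |DL(S')_j - DL(Q')_{j+s}|` and `d_v(s)` is the max over rows
`i ∈ {1,…,n-1}` and columns `j ∈ ZMod n` of `|d_{ij}(S') - d_{i,j+s}(Q')|`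
for the cyclic distance matrices of the value projections of the multiples
`S' = (n/m₁)S`, `Q' = (n/m₂)Q`. -/
noncomputable def Elmo {m₁ m₂ : ℕ} (S : HSeq d m₁) (Q : HSeq d m₂) : ℝ :=
  letI : NeZero (Nat.lcm m₁ m₂) := ⟨(Nat.lcm_pos S.m_pos Q.m_pos).ne'⟩
  Finset.univ.inf' (Finset.univ_nonempty_iff.mpr ⟨0⟩)
    fun s : ZMod (Nat.lcm m₁ m₂) =>
      max
        (Finset.univ.sup' (Finset.univ_nonempty_iff.mpr ⟨0⟩)
          fun j : ZMod (Nat.lcm m₁ m₂) =>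
            |S.DLc (Nat.lcm m₁ m₂) j - Q.DLc (Nat.lcm m₁ m₂) (j + s)|)
        ((((Finset.Icc 1 (Nat.lcm m₁ m₂ - 1) ×ˢ
            (Finset.univ : Finset (ZMod (Nat.lcm m₁ m₂)))).sup
          fun x : ℕ × ZMod (Nat.lcm m₁ m₂) =>
            Real.nnabs
              (‖S.vproj (Nat.lcm m₁ m₂) x.2 -
                  S.vproj (Nat.lcm m₁ m₂) ((x.1 : ZMod (Nat.lcm m₁ m₂)) + x.2)‖ -
                ‖Q.vproj (Nat.lcm m₁ m₂) (x.2 + s) -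
                  Q.vproj (Nat.lcm m₁ m₂) ((x.1 : ZMod (Nat.lcm m₁ m₂)) + x.2 + s)‖)) : NNReal) : ℝ)

end HSeq

namespace HSeq

variable {d m : ℕ}

lemma mcast_pos (S : HSeq d m) : (0:ℤ) < (m:ℤ) := Int.natCast_pos.mpr S.m_pos

/-- The index in the motif of the `k`-th point (over ℤ). -/
def idx (S : HSeq d m) (k : ℤ) : Fin m :=
  ⟨(k % (m : ℤ)).toNat, by
    have h1 : (0:ℤ) < m := S.mcast_pos
    have h2 := Int.emod_lt_of_pos k h1
    have h3 := Int.emod_nonneg k h1.ne'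
    omega⟩

noncomputable def T (S : HSeq d m) (k : ℤ) : ℝ :=
  (S.p (S.idx k)).1 + S.l * ((k / (m : ℤ) : ℤ) : ℝ)

def V (S : HSeq d m) (k : ℤ) : EuclideanSpace ℝ (Fin d) :=
  (S.p (S.idx k)).2

lemma idx_cong (S : HSeq d m) {k k' : ℤ} (h : k % (m:ℤ) = k' % (m:ℤ)) :
    S.idx k = S.idx k' := by
  simp only [idx, h]

lemma V_cong (S : HSeq d m) {k k' : ℤ} (h : k % (m:ℤ) = k' % (m:ℤ)) :
    S.V k = S.V k' := by
  simp only [V, S.idx_cong h]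

lemma T_lt_succ (S : HSeq d m) (k : ℤ) : S.T k < S.T (k + 1) := by
  have hm : (0:ℤ) < m := S.mcast_pos
  have hk : k % (m:ℤ) + (m:ℤ) * (k / m) = k := Int.emod_add_mul_ediv k m
  set q := k / (m:ℤ) with hq
  set r := k % (m:ℤ) with hr
  have hr0 : 0 ≤ r := Int.emod_nonneg k hm.ne'
  have hrm : r < m := Int.emod_lt_of_pos k hm
  have hk1 : k + 1 = r + 1 + m * q := by omega
  have hmod : (k + 1) % m = (r + 1) % m := by rw [hk1, Int.add_mul_emod_self_left]
  have hdiv : (k + 1) / m = (r + 1) / m + q := by rw [hk1, Int.add_mul_ediv_left _ _ hm.ne']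
  rcases lt_or_eq_of_le (by omega : r + 1 ≤ m) with hc | hc
  · have h1 : (r + 1) % m = r + 1 := Int.emod_eq_of_lt (by omega) hc
    have h2 : (r + 1) / m = 0 := Int.ediv_eq_zero_of_lt (by omega) hc
    have hlt : S.idx k < S.idx (k + 1) := by
      simp only [idx, Fin.mk_lt_mk, hmod, h1, ← hr]
      omega
    have hp : (S.p (S.idx k)).1 < (S.p (S.idx (k+1))).1 := S.t_strict hlt
    simp only [T, hdiv, h2, zero_add, ← hq]
    linarith
  · have h1 : (r + 1) % m = 0 := by rw [hc]; exact Int.emod_self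
    have h2 : (r + 1) / m = 1 := by rw [hc]; exact Int.ediv_self hm.ne'
    have hi1 : S.idx (k + 1) = ⟨0, S.m_pos⟩ := by
      refine Fin.ext ?_
      show ((k+1) % (m:ℤ)).toNat = 0
      rw [hmod, h1]; rfl
    have hb : (S.p (S.idx k)).1 < S.l := S.t_lt _
    have hb0 : 0 ≤ (S.p ⟨0, S.m_pos⟩).1 := S.t0_nonneg
    simp only [T, hdiv, h2, hi1, ← hq]
    push_cast
    nlinarith [S.l_pos]

lemma T_strictMono (S : HSeq d m) : StrictMono S.T :=
  strictMono_int_of_lt_succ S.T_lt_succ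

lemma T_period (S : HSeq d m) (k : ℤ) : S.T (k + m) = S.T k + S.l := by
  have hm : (0:ℤ) < m := S.mcast_pos
  have h1 : (k + m) % m = k % m := by
    have := Int.add_mul_emod_self_left (a := k) (b := (m:ℤ)) (c := 1)
    simpa using this
  have h2 : (k + m) / m = k / m + 1 := by
    have := Int.add_mul_ediv_left k (b := (m:ℤ)) 1 hm.ne'
    simpa using this
  simp only [T, S.idx_cong h1, h2]
  push_cast
  ring

lemma T_period_mul (S : HSeq d m) (k j : ℤ) : S.T (k + m * j) = S.T k + S.l * (j : ℝ) := by
  induction j using Int.induction_on with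
  | zero => simp
  | succ n ih =>
      have h : k + (m:ℤ) * (n + 1) = (k + m * n) + m := by ring
      rw [h, S.T_period, ih]; push_cast; ring
  | pred n ih =>
      have h : k + (m:ℤ) * (-n) = (k + m * (-n - 1)) + m := by ring
      rw [h, S.T_period] at ih
      have h2 : k + (m:ℤ) * (-(n:ℤ) - 1) = k + m * (-n - 1) := by ring
      rw [h2]
      push_cast at ih ⊢
      linarith

lemma mem_pts_iff (S : HSeq d m) (x : ℝ × EuclideanSpace ℝ (Fin d)) :
    x ∈ S.pts ↔ ∃ k : ℤ, x = (S.T k, S.V k) := by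
  have hm : (0:ℤ) < m := S.mcast_pos
  constructor
  · rintro ⟨i, j, rfl⟩
    refine ⟨(i.val : ℤ) + m * j, ?_⟩
    have h1 : ((i.val : ℤ) + m * j) % m = i.val := by
      rw [Int.add_mul_emod_self_left, Int.emod_eq_of_lt (by positivity) (by exact_mod_cast i.isLt)]
    have h2 : ((i.val : ℤ) + m * j) / m = j := by
      rw [Int.add_mul_ediv_left _ _ hm.ne',
        Int.ediv_eq_zero_of_lt (by positivity) (by exact_mod_cast i.isLt), zero_add]
    have hidx : S.idx ((i.val : ℤ) + m * j) = i := by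
      refine Fin.ext ?_
      show (((i.val : ℤ) + m * j) % (m:ℤ)).toNat = i.val
      rw [h1]; omega
    simp only [T, V, h1, h2, hidx]
  · rintro ⟨k, rfl⟩
    exact ⟨S.idx k, k / m, by simp only [T, V]⟩

lemma mem_tpts_iff (S : HSeq d m) (r : ℝ) :
    r ∈ S.tpts ↔ ∃ k : ℤ, r = S.T k := by
  constructor
  · rintro ⟨i, j, rfl⟩
    obtain ⟨k, hk⟩ := (S.mem_pts_iff ((S.p i).1 + S.l * j, (S.p i).2)).mp ⟨i, j, rfl⟩
    exact ⟨k, congrArg Prod.fst hk⟩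
  · rintro ⟨k, rfl⟩
    obtain ⟨i, j, hk⟩ := (S.mem_pts_iff (S.T k, S.V k)).mpr ⟨k, rfl⟩
    exact ⟨i, j, congrArg Prod.fst hk⟩

lemma DL_val (S : HSeq d m) [NeZero m] (i : ZMod m) :
    S.DL i = S.T ((i.val : ℤ) + 1) - S.T (i.val : ℤ) := by
  have hm : (0:ℤ) < m := S.mcast_pos
  have hvm : i.val < m := i.val_lt
  have h1 : ((i.val : ℤ)) % m = i.val := Int.emod_eq_of_lt (by positivity) (by exact_mod_cast hvm)
  have h2 : ((i.val : ℤ)) / m = 0 := Int.ediv_eq_zero_of_lt (by positivity) (by exact_mod_cast hvm)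
  have hidxk : S.idx (i.val : ℤ) = ⟨i.val, hvm⟩ := by
    refine Fin.ext ?_
    show (((i.val : ℤ)) % (m:ℤ)).toNat = i.val
    rw [h1]; omega
  have hTk : S.T (i.val : ℤ) = (S.p ⟨i.val, hvm⟩).1 := by
    rw [T, hidxk, h2]; simp
  rcases lt_or_eq_of_le (by omega : i.val + 1 ≤ m) with hc | hc
  · have h3 : ((i.val : ℤ) + 1) % m = (i.val : ℤ) + 1 :=
      Int.emod_eq_of_lt (by positivity) (by exact_mod_cast hc)
    have h4 : ((i.val : ℤ) + 1) / m = 0 :=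
      Int.ediv_eq_zero_of_lt (by positivity) (by exact_mod_cast hc)
    have hidx1 : S.idx ((i.val : ℤ) + 1) = ⟨i.val + 1, hc⟩ := by
      refine Fin.ext ?_
      show ((((i.val : ℤ)) + 1) % (m:ℤ)).toNat = i.val + 1
      rw [h3]; omega
    have hT1 : S.T ((i.val : ℤ) + 1) = (S.p ⟨i.val + 1, hc⟩).1 := by
      rw [T, hidx1, h4]; simp
    rw [DL]
    rw [dif_pos hc, hTk, hT1]
  · have hcz : ((i.val : ℤ) + 1) = m := by exact_mod_cast hc
    have h3 : ((i.val : ℤ) + 1) % m = 0 := by rw [hcz]; exact Int.emod_self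
    have h4 : ((i.val : ℤ) + 1) / m = 1 := by rw [hcz]; exact Int.ediv_self hm.ne'
    have hidx1 : S.idx ((i.val : ℤ) + 1) = ⟨0, S.m_pos⟩ := by
      refine Fin.ext ?_
      show ((((i.val : ℤ)) + 1) % (m:ℤ)).toNat = 0
      rw [h3]; rfl
    have hT1 : S.T ((i.val : ℤ) + 1) = (S.p ⟨0, S.m_pos⟩).1 + S.l := by
      rw [T, hidx1, h4]; simp
    rw [DL]
    rw [dif_neg (by omega), hTk, hT1]

lemma DL_int (S : HSeq d m) [NeZero m] (k : ℤ) :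
    S.DL ((k : ZMod m)) = S.T (k + 1) - S.T k := by
  rw [S.DL_val]
  set a : ℤ := (((k : ZMod m)).val : ℤ) with ha
  have hmod : a % m = k % m := by
    rw [ha, ZMod.val_intCast, Int.emod_emod_of_dvd _ dvd_rfl]
  have hk : k % (m:ℤ) + (m:ℤ) * (k / m) = k := Int.emod_add_mul_ediv k m
  have ha2 : a % (m:ℤ) = a := by
    rw [ha, ZMod.val_intCast]
    exact Int.emod_emod_of_dvd _ dvd_rfl
  have hTk : S.T k = S.T a + S.l * ((k / (m:ℤ) : ℤ) : ℝ) := by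
    have h := S.T_period_mul a (k / (m:ℤ))
    rw [show a + (m:ℤ) * (k / m) = k by omega] at h
    exact h
  have hTk1 : S.T (k + 1) = S.T (a + 1) + S.l * ((k / (m:ℤ) : ℤ) : ℝ) := by
    have h := S.T_period_mul (a + 1) (k / (m:ℤ))
    rw [show a + 1 + (m:ℤ) * (k / m) = k + 1 by omega] at h
    exact h
  rw [hTk, hTk1]
  ring

end HSeq

namespace HSeq

variable {d m : ℕ}

lemma natCast_val_self {n : ℕ} [NeZero n] (x : ZMod n) : ((x.val : ℕ) : ZMod n) = x := by
  simp [ZMod.natCast_val, ZMod.cast_id]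

lemma intCast_val_self {n : ℕ} [NeZero n] (x : ZMod n) : (((x.val : ℤ)) : ZMod n) = x := by
  push_cast
  exact natCast_val_self x

lemma zmod_val_modeq {n : ℕ} [NeZero n] (hd : m ∣ n) (x : ZMod n) (a : ℤ)
    (hax : (a : ZMod n) = x) : ((x.val : ℤ)) % (m : ℤ) = a % m := by
  have h1 : ((x.val : ℤ) : ZMod n) = (a : ZMod n) := by rw [intCast_val_self x, hax]
  have h2 : (x.val : ℤ) ≡ a [ZMOD (n : ℤ)] := (ZMod.intCast_eq_intCast_iff _ _ _).mp h1
  exact h2.of_dvd (Int.natCast_dvd_natCast.mpr hd)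

lemma vproj_int (S : HSeq d m) {n : ℕ} [NeZero n] (hd : m ∣ n) (x : ZMod n) (a : ℤ)
    (hax : (a : ZMod n) = x) : S.vproj n x = S.V a := by
  have hmod := zmod_val_modeq hd x a hax
  rw [← S.V_cong hmod]
  show (S.p ⟨x.val % m, _⟩).2 = (S.p (S.idx (x.val : ℤ))).2
  congr 1

lemma DLc_int (S : HSeq d m) {n : ℕ} [NeZero n] (hd : m ∣ n) (x : ZMod n) (a : ℤ)
    (hax : (a : ZMod n) = x) : S.DLc n x = S.T (a + 1) - S.T a := by
  haveI : NeZero m := ⟨S.m_pos.ne'⟩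
  have hmod := zmod_val_modeq hd x a hax
  have h1 : ((x.val : ℕ) : ZMod m) = ((a : ℤ) : ZMod m) := by
    rw [show ((x.val : ℕ) : ZMod m) = (((x.val : ℤ)) : ZMod m) by push_cast; rfl]
    exact (ZMod.intCast_eq_intCast_iff _ _ _).mpr hmod
  rw [DLc, h1, S.DL_int]

end HSeq

/-- continuity of the high-dimensional elastic metric: if some bijection
`h` between the points of `S` and of `Q` moves every point by at most `ε` in the Euclidean
norm of `ℝ × ℝ^d`, and `2ε` is smaller than every distance between distinct points of the
time projections `t(S)` and `t(Q)`, then `Elm^o(S,Q) ≤ 2ε`.  In particular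
`Elm^o(S,Q) ≤ 2 d_B(S,Q)` under the corresponding assumption on the bottleneck
distance `d_B`. -/
theorem HElmo_continuity {d m₁ m₂ : ℕ} (S : HSeq d m₁) (Q : HSeq d m₂)
    (ε : ℝ) (hε : 0 ≤ ε)
    (h : ℝ × EuclideanSpace ℝ (Fin d) → ℝ × EuclideanSpace ℝ (Fin d))
    (hbij : Set.BijOn h S.pts Q.pts)
    (hmove : ∀ x ∈ S.pts, Real.sqrt ((x.1 - (h x).1) ^ 2 + ‖x.2 - (h x).2‖ ^ 2) ≤ ε)
    (hsepS : ∀ a ∈ S.tpts, ∀ b ∈ S.tpts, a ≠ b → 2 * ε < |a - b|)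
    (hsepQ : ∀ a ∈ Q.tpts, ∀ b ∈ Q.tpts, a ≠ b → 2 * ε < |a - b|) :
    HSeq.Elmo S Q ≤ 2 * ε := by
  classical
  haveI : NeZero m₁ := ⟨S.m_pos.ne'⟩
  haveI : NeZero m₂ := ⟨Q.m_pos.ne'⟩
  haveI hnz : NeZero (Nat.lcm m₁ m₂) := ⟨(Nat.lcm_pos S.m_pos Q.m_pos).ne'⟩
  have hgex : ∀ k : ℤ, ∃ k', h (S.T k, S.V k) = (Q.T k', Q.V k') := fun k =>
    (Q.mem_pts_iff _).mp (hbij.mapsTo ((S.mem_pts_iff _).mpr ⟨k, rfl⟩))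
  choose g hg using hgex
  have hbnd : ∀ k : ℤ, |S.T k - Q.T (g k)| ≤ ε ∧ ‖S.V k - Q.V (g k)‖ ≤ ε := by
    intro k
    have hx : (S.T k, S.V k) ∈ S.pts := (S.mem_pts_iff _).mpr ⟨k, rfl⟩
    have hmv : Real.sqrt ((S.T k - Q.T (g k)) ^ 2 + ‖S.V k - Q.V (g k)‖ ^ 2) ≤ ε := by
      simpa [hg k] using hmove _ hx
    constructor
    · calc |S.T k - Q.T (g k)| = Real.sqrt ((S.T k - Q.T (g k)) ^ 2) :=
            (Real.sqrt_sq_eq_abs _).symm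
        _ ≤ Real.sqrt ((S.T k - Q.T (g k)) ^ 2 + ‖S.V k - Q.V (g k)‖ ^ 2) :=
            Real.sqrt_le_sqrt (le_add_of_nonneg_right (by positivity))
        _ ≤ ε := hmv
    · calc ‖S.V k - Q.V (g k)‖ = Real.sqrt (‖S.V k - Q.V (g k)‖ ^ 2) :=
            (Real.sqrt_sq (norm_nonneg _)).symm
        _ ≤ Real.sqrt ((S.T k - Q.T (g k)) ^ 2 + ‖S.V k - Q.V (g k)‖ ^ 2) :=
            Real.sqrt_le_sqrt (le_add_of_nonneg_left (by positivity))
        _ ≤ ε := hmv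
  have hsep' : ∀ k k' : ℤ, k < k' → 2 * ε < S.T k' - S.T k := by
    intro k k' hkk
    have hne : S.T k' ≠ S.T k := S.T_strictMono.injective.ne (by omega)
    have := hsepS (S.T k') ((S.mem_tpts_iff _).mpr ⟨k', rfl⟩)
      (S.T k) ((S.mem_tpts_iff _).mpr ⟨k, rfl⟩) hne
    rwa [abs_of_pos (sub_pos.mpr (S.T_strictMono hkk))] at this
  have gmono : StrictMono g := by
    refine strictMono_int_of_lt_succ (fun k => ?_)
    by_contra hcon
    push_neg at hcon
    have h1 : Q.T (g (k + 1)) ≤ Q.T (g k) := Q.T_strictMono.monotone hcon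
    have h2 := (hbnd k).1
    have h3 := (hbnd (k + 1)).1
    rw [abs_le] at h2 h3
    have := hsep' k (k + 1) (by omega)
    linarith [h2.1, h2.2, h3.1, h3.2]
  have gsurj : ∀ k', ∃ k, g k = k' := by
    intro k'
    obtain ⟨x, hxS, hx⟩ := hbij.surjOn ((Q.mem_pts_iff _).mpr ⟨k', rfl⟩)
    obtain ⟨k, rfl⟩ := (S.mem_pts_iff _).mp hxS
    exact ⟨k, Q.T_strictMono.injective (congrArg Prod.fst ((hg k).symm.trans hx))⟩
  have gsucc : ∀ k, g (k + 1) = g k + 1 := by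
    intro k
    have h1 : g k < g (k + 1) := gmono (by omega)
    by_contra hcon
    obtain ⟨j, hj⟩ := gsurj (g k + 1)
    rcases le_or_gt j k with hjk | hjk
    · have := gmono.monotone hjk; omega
    · have : g (k + 1) ≤ g j := gmono.monotone (by omega); omega
  have glin : ∀ k, g k = k + g 0 := by
    intro k
    induction k using Int.induction_on with
    | zero => omega
    | succ i ih => rw [gsucc]; omega
    | pred i ih =>
        have hx := gsucc (-(i : ℤ) - 1)
        rw [show (-(i : ℤ) - 1) + 1 = -(i : ℤ) by ring] at hx
        omega
  set s₀ := g 0 with hs0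
  have ht : ∀ k : ℤ, |S.T k - Q.T (k + s₀)| ≤ ε := fun k => by
    have := (hbnd k).1; rwa [glin k] at this
  have hvv : ∀ k : ℤ, ‖S.V k - Q.V (k + s₀)‖ ≤ ε := fun k => by
    have := (hbnd k).2; rwa [glin k] at this
  unfold HSeq.Elmo
  set s : ZMod (Nat.lcm m₁ m₂) := ((s₀ : ℤ) : ZMod (Nat.lcm m₁ m₂)) with hs
  refine le_trans (Finset.inf'_le _ (Finset.mem_univ s)) (max_le ?_ ?_)
  · refine Finset.sup'_le _ _ (fun j _ => ?_)
    set a : ℤ := (j.val : ℤ) with hadef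
    have hja : ((a : ℤ) : ZMod (Nat.lcm m₁ m₂)) = j := HSeq.intCast_val_self j
    have hS : S.DLc (Nat.lcm m₁ m₂) j = S.T (a + 1) - S.T a :=
      S.DLc_int (Nat.dvd_lcm_left _ _) j a hja
    have hQ : Q.DLc (Nat.lcm m₁ m₂) (j + s) = Q.T ((a + s₀) + 1) - Q.T (a + s₀) := by
      refine Q.DLc_int (Nat.dvd_lcm_right _ _) (j + s) (a + s₀) ?_
      push_cast
      rw [hja, hs]
    rw [hS, hQ]
    have h1 := ht a
    have h2 := ht (a + 1)
    rw [show a + 1 + s₀ = a + s₀ + 1 by ring] at h2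
    rw [abs_le] at h1 h2 ⊢
    constructor <;> [linarith [h1.1, h2.2]; linarith [h1.2, h2.1]]
  · rw [← Real.coe_toNNReal (2 * ε) (by positivity), NNReal.coe_le_coe]
    refine Finset.sup_le (fun x hx => ?_)
    rw [← NNReal.coe_le_coe, Real.coe_nnabs, Real.coe_toNNReal _ (by positivity)]
    obtain ⟨i, j⟩ := x
    dsimp only
    set a : ℤ := (j.val : ℤ) with hadef
    have hja : ((a : ℤ) : ZMod (Nat.lcm m₁ m₂)) = j := HSeq.intCast_val_self j
    have e1 : S.vproj (Nat.lcm m₁ m₂) j = S.V a :=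
      S.vproj_int (Nat.dvd_lcm_left _ _) j a hja
    have e2 : S.vproj (Nat.lcm m₁ m₂) ((i : ZMod (Nat.lcm m₁ m₂)) + j) = S.V ((i : ℤ) + a) := by
      refine S.vproj_int (Nat.dvd_lcm_left _ _) _ ((i : ℤ) + a) ?_
      push_cast
      rw [hja]
    have e3 : Q.vproj (Nat.lcm m₁ m₂) (j + s) = Q.V (a + s₀) := by
      refine Q.vproj_int (Nat.dvd_lcm_right _ _) _ (a + s₀) ?_
      push_cast
      rw [hja, hs]
    have e4 : Q.vproj (Nat.lcm m₁ m₂) ((i : ZMod (Nat.lcm m₁ m₂)) + j + s) =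
        Q.V ((i : ℤ) + a + s₀) := by
      refine Q.vproj_int (Nat.dvd_lcm_right _ _) _ ((i : ℤ) + a + s₀) ?_
      push_cast
      rw [hja, hs]
    rw [e1, e2, e3, e4]
    have h1 := hvv a
    have h2 := hvv ((i : ℤ) + a)
    calc |‖S.V a - S.V ((i : ℤ) + a)‖ - ‖Q.V (a + s₀) - Q.V ((i : ℤ) + a + s₀)‖|
        ≤ ‖(S.V a - S.V ((i : ℤ) + a)) - (Q.V (a + s₀) - Q.V ((i : ℤ) + a + s₀))‖ :=
          abs_norm_sub_norm_le _ _
      _ = ‖(S.V a - Q.V (a + s₀)) - (S.V ((i : ℤ) + a) - Q.V ((i : ℤ) + a + s₀))‖ := by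
          congr 1; abel
      _ ≤ ‖S.V a - Q.V (a + s₀)‖ + ‖S.V ((i : ℤ) + a) - Q.V ((i : ℤ) + a + s₀)‖ :=
          norm_sub_le _ _
      _ ≤ 2 * ε := by linarith
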